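/- With U(m,j) = C(m-j,j)·2^j, define A_t = Σ_{j=0}^{t-2} U(3t-2, j) − Σ_{j≥t} U(3t-2, j), B_t = Σ_{j=0}^{t-1} U(3t-1, j) − Σ_{j≥t+1} U(3t-1, j), and D_t = Σ_{j=0}^{t-1} U(3t, j) − Σ_{j≥t+1} U(3t, j). Then D_t = 2·A_t + B_t for every t ≥ 1. -/

import Mathlib

def U (m j : ℕ) : ℕ := Nat.choose (m - j) j * 2 ^ j

def A (t : ℕ) : ℤ :=
  (∑ j ∈ Finset.range (t - 1), U (3 * t - 2) j : ℤ)
    - ∑ j ∈ Finset.Icc t (3 * t), (U (3 * t - 2) j : ℤ)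

def B (t : ℕ) : ℤ :=
  (∑ j ∈ Finset.range t, U (3 * t - 1) j : ℤ)
    - ∑ j ∈ Finset.Icc (t + 1) (3 * t), (U (3 * t - 1) j : ℤ)

def D (t : ℕ) : ℤ :=
  (∑ j ∈ Finset.range t, U (3 * t) j : ℤ)
    - ∑ j ∈ Finset.Icc (t + 1) (3 * t), (U (3 * t) j : ℤ)

lemma Urec (m j : ℕ) : U (m + 2) (j + 1) = U (m + 1) (j + 1) + 2 * U m j := by
  unfold U
  rcases le_or_gt j m with h | h
  · have h1 : m + 2 - (j + 1) = (m - j) + 1 := by omega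
    have h2 : m + 1 - (j + 1) = m - j := by omega
    rw [h1, h2, Nat.choose_succ_succ, pow_succ]
    ring
  · have h1 : m + 2 - (j + 1) = m + 1 - j := by omega
    have h2 : m + 1 - j = 0 := by omega
    have h3 : m + 1 - (j + 1) = 0 := by omega
    have h4 : m - j = 0 := by omega
    rw [h1, h2, h3, h4, Nat.choose_eq_zero_of_lt (Nat.succ_pos j),
      Nat.choose_eq_zero_of_lt (show 0 < j by omega)]
    ring

theorem stmt15 (t : ℕ) (ht : 1 ≤ t) : D t = 2 * A t + B t := by
  obtain ⟨s, rfl⟩ : ∃ s, t = s + 1 := ⟨t - 1, by omega⟩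
  have e1 : 3 * (s + 1) - 2 = 3 * s + 1 := by omega
  have e2 : 3 * (s + 1) - 1 = 3 * s + 2 := by omega
  have e3 : 3 * (s + 1) = 3 * s + 3 := by omega
  have e4 : s + 1 - 1 = s := rfl
  unfold A B D
  rw [e1, e2, e4, e3]
  -- first sums
  have h1 : ∑ j ∈ Finset.range (s + 1), U (3 * s + 3) j
      = ∑ j ∈ Finset.range (s + 1), U (3 * s + 2) j
        + 2 * ∑ j ∈ Finset.range s, U (3 * s + 1) j := by
    rw [Finset.sum_range_succ' (fun j => U (3 * s + 3) j),
        Finset.sum_range_succ' (fun j => U (3 * s + 2) j)]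
    have : ∀ i ∈ Finset.range s,
        U (3 * s + 3) (i + 1) = U (3 * s + 2) (i + 1) + 2 * U (3 * s + 1) i := by
      intro i _
      exact Urec (3 * s + 1) i
    rw [Finset.sum_congr rfl this, Finset.sum_add_distrib, ← Finset.mul_sum]
    simp [U]
    ring
  -- second sums
  have h2 : ∑ j ∈ Finset.Icc (s + 2) (3 * s + 3), U (3 * s + 3) j
      = ∑ j ∈ Finset.Icc (s + 2) (3 * s + 3), U (3 * s + 2) j
        + 2 * ∑ j ∈ Finset.Icc (s + 1) (3 * s + 3), U (3 * s + 1) j := by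
    rw [← Finset.Ico_add_one_right_eq_Icc, ← Finset.Ico_add_one_right_eq_Icc,
        Finset.sum_Ico_eq_sum_range, Finset.sum_Ico_eq_sum_range, Finset.sum_Ico_eq_sum_range]
    have ea : 3 * s + 3 + 1 - (s + 2) = 2 * s + 2 := by omega
    have eb : 3 * s + 3 + 1 - (s + 1) = 2 * s + 3 := by omega
    rw [ea, eb, Finset.sum_range_succ (fun k => U (3 * s + 1) (s + 1 + k)) (2 * s + 2)]
    have hz : U (3 * s + 1) (s + 1 + (2 * s + 2)) = 0 := by
      have : 3 * s + 1 - (s + 1 + (2 * s + 2)) = 0 := by omega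
      simp [U, this, Nat.choose_eq_zero_of_lt]
    rw [hz, add_zero]
    have : ∀ i ∈ Finset.range (2 * s + 2),
        U (3 * s + 3) (s + 2 + i) = U (3 * s + 2) (s + 2 + i) + 2 * U (3 * s + 1) (s + 1 + i) := by
      intro i _
      have : s + 2 + i = (s + 1 + i) + 1 := by omega
      rw [this]
      exact Urec (3 * s + 1) (s + 1 + i)
    rw [Finset.sum_congr rfl this, Finset.sum_add_distrib, ← Finset.mul_sum]
  have h1' := congrArg (Nat.cast : ℕ → ℤ) h1
  have h2' := congrArg (Nat.cast : ℕ → ℤ) h2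
  push_cast at h1' h2' ⊢
  linarith
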